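/- For the qubit testers A = {P_{−φ/2} ⊗ P_{−θ/2}, P_{π−φ/2} ⊗ P_{−θ/2}} and B = {P_{φ/2} ⊗ P_{θ/2}, P_{φ/2−π} ⊗ P_{θ/2}}, where P_α = (1/2)(I + sin α σ_x + cos α σ_z), the robustness of incompatibility is bounded below by R_T(A,B) ≥ sin(θ/2)/(1 + sin(θ/2)). -/

import Mathlib

open Matrix Finset
open scoped Kronecker ComplexOrder

noncomputable section

variable {n m : Type*} [Fintype n] [DecidableEq n] [Fintype m] [DecidableEq m]

/-- A density operator: positive semidefinite with unit trace. -/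
def IsDensity (ρ : Matrix n n ℂ) : Prop := ρ.PosSemidef ∧ ρ.trace = 1

/-- A quantum tester on `H₁ ⊗ H₀` with normalization state `ρ` on `H₀`:
a family of positive semidefinite operators summing to `I₁ ⊗ ρ`. -/
def IsTester {S : Type*} [Fintype S] (T : S → Matrix (m × n) (m × n) ℂ)
    (ρ : Matrix n n ℂ) : Prop :=
  IsDensity ρ ∧ (∀ j, (T j).PosSemidef) ∧
    ∑ j, T j = (1 : Matrix m m ℂ) ⊗ₖ ρ

/-- Two testers are compatible if a joint tester with the correct marginals exists. -/
def TesterCompatible {S S' : Type*} [Fintype S] [Fintype S']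
    (A : S → Matrix (m × n) (m × n) ℂ) (B : S' → Matrix (m × n) (m × n) ℂ) : Prop :=
  ∃ (C : S × S' → Matrix (m × n) (m × n) ℂ) (τ : Matrix n n ℂ),
    IsTester C τ ∧ (∀ j, ∑ k, C (j, k) = A j) ∧ (∀ k, ∑ j, C (j, k) = B k)

/-- λ-compatibility of testers: noisy mixtures become compatible. -/
def TesterLambdaCompatible {S S' : Type*} [Fintype S] [Fintype S']
    (A : S → Matrix (m × n) (m × n) ℂ) (B : S' → Matrix (m × n) (m × n) ℂ)
    (lam : ℝ) : Prop :=
  ∃ (NA : S → Matrix (m × n) (m × n) ℂ) (NB : S' → Matrix (m × n) (m × n) ℂ)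
    (ρ' σ' : Matrix n n ℂ), IsTester NA ρ' ∧ IsTester NB σ' ∧
    TesterCompatible (fun j => (1 - lam) • A j + lam • NA j)
      (fun k => (1 - lam) • B k + lam • NB k)

/-- The robustness of incompatibility of two testers. -/
noncomputable def TesterRobustness {S S' : Type*} [Fintype S] [Fintype S']
    (A : S → Matrix (m × n) (m × n) ℂ) (B : S' → Matrix (m × n) (m × n) ℂ) : ℝ :=
  sInf {lam : ℝ | lam ∈ Set.Icc (0 : ℝ) 1 ∧ TesterLambdaCompatible A B lam}

/-- The robustness of state incompatibility. -/
noncomputable def StateRobustness (ρ σ : Matrix n n ℂ) : ℝ :=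
  sInf {lam : ℝ | lam ∈ Set.Icc (0 : ℝ) 1 ∧ ∃ ρ' σ' : Matrix n n ℂ,
    IsDensity ρ' ∧ IsDensity σ' ∧
    (1 - lam) • ρ + lam • ρ' = (1 - lam) • σ + lam • σ'}

/-- The trace norm of a matrix, as the sum of its singular values. -/
noncomputable def traceNorm (X : Matrix n n ℂ) : ℝ :=
  ∑ i, Real.sqrt ((Matrix.posSemidef_conjTranspose_mul_self X).1.eigenvalues i)

/-- Inverse of the square root of a Hermitian matrix, taken on its support. -/
noncomputable def invSqrt {ρ : Matrix n n ℂ} (hρ : ρ.IsHermitian) : Matrix n n ℂ :=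
  (Matrix.IsHermitian.eigenvectorUnitary hρ : Matrix n n ℂ) *
    Matrix.diagonal (fun i => if hρ.eigenvalues i = 0 then (0 : ℂ)
      else ((Real.sqrt (hρ.eigenvalues i))⁻¹ : ℝ)) *
    (Matrix.IsHermitian.eigenvectorUnitary hρ : Matrix n n ℂ)ᴴ

/-- Orthogonal projection onto the support of a Hermitian matrix. -/
noncomputable def suppProj {ρ : Matrix n n ℂ} (hρ : ρ.IsHermitian) : Matrix n n ℂ :=
  (Matrix.IsHermitian.eigenvectorUnitary hρ : Matrix n n ℂ) *
    Matrix.diagonal (fun i => if hρ.eigenvalues i = 0 then (0 : ℂ) else 1) *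
    (Matrix.IsHermitian.eigenvectorUnitary hρ : Matrix n n ℂ)ᴴ

/-- A POVM with unit `e`: positive semidefinite operators summing to `e`. -/
def IsPOVMOn {S : Type*} [Fintype S] (e : Matrix n n ℂ) (P : S → Matrix n n ℂ) : Prop :=
  (∀ j, (P j).PosSemidef) ∧ ∑ j, P j = e

/-- Compatibility of POVMs with unit `e`. -/
def POVMCompatibleOn {S S' : Type*} [Fintype S] [Fintype S'] (e : Matrix n n ℂ)
    (P : S → Matrix n n ℂ) (Q : S' → Matrix n n ℂ) : Prop :=
  ∃ R : S × S' → Matrix n n ℂ, IsPOVMOn e R ∧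
    (∀ j, ∑ k, R (j, k) = P j) ∧ (∀ k, ∑ j, R (j, k) = Q k)

/-- λ-compatibility of POVMs with unit `e`. -/
def POVMLambdaCompatibleOn {S S' : Type*} [Fintype S] [Fintype S'] (e : Matrix n n ℂ)
    (P : S → Matrix n n ℂ) (Q : S' → Matrix n n ℂ) (lam : ℝ) : Prop :=
  ∃ (JP : S → Matrix n n ℂ) (JQ : S' → Matrix n n ℂ),
    IsPOVMOn e JP ∧ IsPOVMOn e JQ ∧
    POVMCompatibleOn e (fun j => (1 - lam) • P j + lam • JP j)
      (fun k => (1 - lam) • Q k + lam • JQ k)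

/-- The robustness of incompatibility of two POVMs with unit `e`. -/
noncomputable def POVMRobustnessOn {S S' : Type*} [Fintype S] [Fintype S'] (e : Matrix n n ℂ)
    (P : S → Matrix n n ℂ) (Q : S' → Matrix n n ℂ) : ℝ :=
  sInf {lam : ℝ | lam ∈ Set.Icc (0 : ℝ) 1 ∧ POVMLambdaCompatibleOn e P Q lam}

/-- The canonical POVM associated with a tester with normalization state `ρ`. -/
noncomputable def canonicalPOVM {S : Type*} [Fintype S]
    (T : S → Matrix (m × n) (m × n) ℂ) {ρ : Matrix n n ℂ} (hρ : ρ.IsHermitian)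
    (j : S) : Matrix (m × n) (m × n) ℂ :=
  ((1 : Matrix m m ℂ) ⊗ₖ invSqrt hρ) * T j * ((1 : Matrix m m ℂ) ⊗ₖ invSqrt hρ)

end

/-- The qubit projector onto the pure state with Bloch vector `(sin α, 0, cos α)`. -/
noncomputable def Pproj (α : ℝ) : Matrix (Fin 2) (Fin 2) ℂ :=
  (1/2 : ℝ) • ((1 : Matrix (Fin 2) (Fin 2) ℂ) +
    Real.sin α • (!![0, 1; 1, 0] : Matrix (Fin 2) (Fin 2) ℂ) +
    Real.cos α • (!![1, 0; 0, -1] : Matrix (Fin 2) (Fin 2) ℂ))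


namespace Stmt19Aux

/-- the functional `g X = ⟨w, X w⟩` with `w = (1,-1)`. -/
noncomputable def g (X : Matrix (Fin 2) (Fin 2) ℂ) : ℂ := X 0 0 + X 1 1 - X 0 1 - X 1 0

lemma g_eq_dot (X : Matrix (Fin 2) (Fin 2) ℂ) :
    g X = dotProduct (star ![1, -1]) (X *ᵥ ![1, -1]) := by
  simp [g, dotProduct, mulVec, Fin.sum_univ_two]
  ring

lemma g_re_nonneg {X : Matrix (Fin 2) (Fin 2) ℂ} (hX : X.PosSemidef) : 0 ≤ (g X).re := by
  have h := hX.dotProduct_mulVec_nonneg ![1, -1]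
  rw [← g_eq_dot] at h
  exact (Complex.le_def.mp h).1

lemma g_re_le_two {X : Matrix (Fin 2) (Fin 2) ℂ} (hX : X.PosSemidef) (ht : X.trace = 1) :
    (g X).re ≤ 2 := by
  have h := hX.dotProduct_mulVec_nonneg ![1, 1]
  have hd : dotProduct (star ![1, (1:ℂ)]) (X *ᵥ ![1, 1]) = X 0 0 + X 1 1 + X 0 1 + X 1 0 := by
    simp [dotProduct, mulVec, Fin.sum_univ_two]; ring
  rw [hd] at h
  have h1 := (Complex.le_def.mp h).1
  have htr : (X 0 0 + X 1 1).re = 1 := by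
    rw [Matrix.trace_fin_two] at ht
    rw [ht]; simp
  have hg : (g X).re = (X 0 0 + X 1 1).re - (X 0 1 + X 1 0).re := by
    simp [g]; ring
  simp only [Complex.add_re, Complex.zero_re] at h1 htr hg ⊢
  linarith

lemma g_Pproj (α : ℝ) : g (Pproj α) = (1 - Real.sin α : ℝ) := by
  simp [g, Pproj, Matrix.add_apply, Matrix.smul_apply, Matrix.one_apply]
  ring

lemma Pproj_sum {α β : ℝ} (hs : Real.sin β = -Real.sin α) (hc : Real.cos β = -Real.cos α) :
    Pproj α + Pproj β = 1 := by
  unfold Pproj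
  rw [hs, hc]
  module

lemma half_one_density : IsDensity ((1/2 : ℂ) • (1 : Matrix (Fin 2) (Fin 2) ℂ)) := by
  constructor
  · have : ((1/2 : ℂ) • (1 : Matrix (Fin 2) (Fin 2) ℂ)) = Matrix.diagonal (fun _ => (1/2 : ℂ)) := by
      ext i j; by_cases h : i = j <;> simp [Matrix.one_apply, Matrix.diagonal, h]
    rw [this]
    exact Matrix.PosSemidef.diagonal (fun i => by norm_num [Complex.le_def])
  · simp [Matrix.trace_smul, Matrix.trace_one]

lemma half_one_big_psd :
    ((1/2 : ℂ) • (1 : Matrix (Fin 2 × Fin 2) (Fin 2 × Fin 2) ℂ)).PosSemidef := by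
  have : ((1/2 : ℂ) • (1 : Matrix (Fin 2 × Fin 2) (Fin 2 × Fin 2) ℂ)) =
      Matrix.diagonal (fun _ => (1/2 : ℂ)) := by
    ext i j; by_cases h : i = j <;> simp [Matrix.one_apply, Matrix.diagonal, h]
  rw [this]
  exact Matrix.PosSemidef.diagonal (fun i => by norm_num [Complex.le_def])

lemma one_kron_half : (1 : Matrix (Fin 2) (Fin 2) ℂ) ⊗ₖ ((1/2 : ℂ) • (1 : Matrix (Fin 2) (Fin 2) ℂ))
    = (1/2 : ℂ) • (1 : Matrix (Fin 2 × Fin 2) (Fin 2 × Fin 2) ℂ) := by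
  rw [Matrix.kronecker_smul, Matrix.one_kronecker_one]

end Stmt19Aux

/-- for the qubit testers probing linear polarizations, the
robustness of incompatibility is bounded below by `sin(θ/2)/(1 + sin(θ/2))`. -/
theorem stmt19 (θ φ : ℝ) (hθ : θ ∈ Set.Icc 0 Real.pi)
    (A B : Fin 2 → Matrix (Fin 2 × Fin 2) (Fin 2 × Fin 2) ℂ)
    (hAdef : A = ![Pproj (-φ/2) ⊗ₖ Pproj (-θ/2),
                   Pproj (Real.pi - φ/2) ⊗ₖ Pproj (-θ/2)])
    (hBdef : B = ![Pproj (φ/2) ⊗ₖ Pproj (θ/2),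
                   Pproj (φ/2 - Real.pi) ⊗ₖ Pproj (θ/2)]) :
    Real.sin (θ/2) / (1 + Real.sin (θ/2)) ≤ TesterRobustness A B := by
  classical
  open Stmt19Aux in
  set s := Real.sin (θ/2) with hs_def
  have hs0 : 0 ≤ s := Real.sin_nonneg_of_nonneg_of_le_pi (by linarith [hθ.1])
    (by linarith [hθ.2, Real.pi_pos])
  have hs1 : (0:ℝ) < 1 + s := by linarith
  -- the rank-one identity Pproj sums
  have hAsum : Pproj (-φ/2) + Pproj (Real.pi - φ/2) = 1 := by
    apply Pproj_sum <;> simp [Real.sin_pi_sub, Real.cos_pi_sub, neg_div]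
  have hBsum : Pproj (φ/2) + Pproj (φ/2 - Real.pi) = 1 := by
    apply Pproj_sum <;> simp [Real.sin_sub_pi, Real.cos_sub_pi]
  rw [TesterRobustness]
  apply le_csInf
  · -- nonempty: λ = 1 works
    refine ⟨1, ⟨by norm_num, by norm_num⟩, ?_⟩
    set ρ₀ : Matrix (Fin 2) (Fin 2) ℂ := (1/2 : ℂ) • 1 with hρ₀
    set K : Matrix (Fin 2 × Fin 2) (Fin 2 × Fin 2) ℂ := (1 : Matrix (Fin 2) (Fin 2) ℂ) ⊗ₖ ρ₀ with hK
    have hKps : K.PosSemidef := by rw [hK, one_kron_half]; exact half_one_big_psd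
    have hT : IsTester ![K, 0] ρ₀ := by
      refine ⟨half_one_density, ?_, ?_⟩
      · intro j; fin_cases j
        · exact hKps
        · exact Matrix.PosSemidef.zero
      · simp [Fin.sum_univ_two]
        exact hK
    refine ⟨![K, 0], ![K, 0], ρ₀, ρ₀, hT, hT, ?_⟩
    refine ⟨fun p => if p = (0,0) then K else 0, ρ₀, ⟨half_one_density, ?_, ?_⟩, ?_, ?_⟩
    · intro j
      dsimp only
      split
      · exact hKps
      · exact Matrix.PosSemidef.zero
    · rw [Fintype.sum_prod_type]
      simp [Fin.sum_univ_two]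
      exact hK
    · intro j; fin_cases j <;> simp [Fin.sum_univ_two, Prod.ext_iff]
    · intro k; fin_cases k <;> simp [Fin.sum_univ_two, Prod.ext_iff]
  · -- the lower bound
    rintro b ⟨⟨hb0, hb1⟩, NA, NB, ρ', σ', hNA, hNB, C, τ, hC, hCA, hCB⟩
    -- the double sum identity
    have hsum1 : ∑ j : Fin 2, ∑ k : Fin 2, C (j, k)
        = (1 - b) • ((1 : Matrix (Fin 2) (Fin 2) ℂ) ⊗ₖ Pproj (-θ/2)) + b • ((1 : Matrix (Fin 2) (Fin 2) ℂ) ⊗ₖ ρ') := by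
      have : ∑ j : Fin 2, ∑ k : Fin 2, C (j, k) = ∑ j : Fin 2, ((1 - b) • A j + b • NA j) :=
        Finset.sum_congr rfl fun j _ => hCA j
      rw [this, Finset.sum_add_distrib, ← Finset.smul_sum, ← Finset.smul_sum, hNA.2.2,
        hAdef]
      congr 1
      rw [Fin.sum_univ_two]
      simp only [Matrix.cons_val_zero, Matrix.cons_val_one, Matrix.head_cons]
      rw [← Matrix.add_kronecker, hAsum]
    have hsum2 : ∑ j : Fin 2, ∑ k : Fin 2, C (j, k)
        = (1 - b) • ((1 : Matrix (Fin 2) (Fin 2) ℂ) ⊗ₖ Pproj (θ/2)) + b • ((1 : Matrix (Fin 2) (Fin 2) ℂ) ⊗ₖ σ') := by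
      rw [Finset.sum_comm]
      have : ∑ k : Fin 2, ∑ j : Fin 2, C (j, k) = ∑ k : Fin 2, ((1 - b) • B k + b • NB k) :=
        Finset.sum_congr rfl fun k _ => hCB k
      rw [this, Finset.sum_add_distrib, ← Finset.smul_sum, ← Finset.smul_sum, hNB.2.2,
        hBdef]
      congr 1
      rw [Fin.sum_univ_two]
      simp only [Matrix.cons_val_zero, Matrix.cons_val_one, Matrix.head_cons]
      rw [← Matrix.add_kronecker, hBsum]
    have hbig := hsum1.symm.trans hsum2
    -- extract entries
    have hE : ∀ i j : Fin 2, (1 - b) • Pproj (-θ/2) i j + b • ρ' i j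
        = (1 - b) • Pproj (θ/2) i j + b • σ' i j := by
      intro i j
      have := congrFun (congrFun hbig (0, i)) (0, j)
      simpa [Matrix.add_apply, Matrix.smul_apply, Matrix.kroneckerMap_apply,
        Matrix.one_apply_eq] using this
    have hgE : (1 - b) • g (Pproj (-θ/2)) + b • g ρ'
        = (1 - b) • g (Pproj (θ/2)) + b • g σ' := by
      simp only [g, smul_add, smul_sub, Complex.real_smul] at hE ⊢
      have e00 := hE 0 0; have e11 := hE 1 1; have e01 := hE 0 1; have e10 := hE 1 0
      linear_combination e00 + e11 - e01 - e10
    rw [g_Pproj, g_Pproj] at hgE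
    -- take real parts
    have hre : (1 - b) * (1 - Real.sin (-θ/2)) + b * (g ρ').re
        = (1 - b) * (1 - Real.sin (θ/2)) + b * (g σ').re := by
      have := congrArg Complex.re hgE
      simpa only [Complex.add_re, Complex.real_smul, Complex.re_ofReal_mul, Complex.ofReal_re] using this
    rw [neg_div, Real.sin_neg] at hre
    have h1 : 0 ≤ (g ρ').re := g_re_nonneg hNA.1.1
    have h2 : (g σ').re ≤ 2 := g_re_le_two hNB.1.1 hNB.1.2
    rw [div_le_iff₀ hs1]
    nlinarith [hre, h1, h2, hb0, hb1]
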